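/- Let (Ω, 𝓕) be a measurable space and let ρ and ρ′ be two distinct probability measures on (Ω, 𝓕). Then for every m ≥ 1 there exist 2m pairwise distinct numbers ε₁, …, ε_{2m} ∈ [0,1], a partition of the index set {1,…,2m} into two sets S and T each of size m, and positive weights (β_i)_{i=1}^{2m} with ∑_{i∈S} β_i = 1 and ∑_{j∈T} β_j = 1, such that, writing μ_i = ε_i ρ + (1 − ε_i) ρ′, one has ∑_{i∈S} β_i · μ_i^{×(2m−2)} = ∑_{j∈T} β_j · μ_j^{×(2m−2)} as measures on Ω^{2m−2}. In particular, the two mixtures of measures ∑_{i∈S} β_i δ_{μ_i} and ∑_{j∈T} β_j δ_{μ_j} are distinct mixtures of m components with identical (2m−2)-fold product laws. -/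
import Mathlib

open MeasureTheory Polynomial Finset

lemma leadingCoeff_lagrange_basis {F : Type*} [Field F] {ι : Type*} [DecidableEq ι]
    (s : Finset ι) (v : ι → F) (i : ι) :
    (Lagrange.basis s v i).leadingCoeff = Lagrange.nodalWeight s v i := by
  unfold Lagrange.basis Lagrange.nodalWeight
  rw [leadingCoeff_prod]
  refine Finset.prod_congr rfl fun j _ => ?_
  rw [Lagrange.basisDivisor, leadingCoeff_mul, leadingCoeff_C,
    (monic_X_sub_C (v j)).leadingCoeff, mul_one]

lemma key_vanish {F : Type*} [Field F] {ι : Type*} [DecidableEq ι]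
    (s : Finset ι) (v : ι → F) (hvs : Set.InjOn v s) (k : ℕ) (hk : k + 1 < s.card) :
    ∑ i ∈ s, Lagrange.nodalWeight s v i * (v i) ^ k = 0 := by
  have hdeg : (X ^ k : F[X]).degree < s.card := by
    rw [degree_X_pow]; exact_mod_cast (by omega : k < s.card)
  have h := Lagrange.eq_interpolate hvs hdeg
  have h2 := congrArg (fun p => Polynomial.coeff p (s.card - 1)) h
  simp only [coeff_X_pow, Lagrange.interpolate_apply, finset_sum_coeff, coeff_C_mul,
    eval_pow, eval_X] at h2
  rw [if_neg (by omega)] at h2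
  have hb : ∀ i ∈ s, (Lagrange.basis s v i).coeff (s.card - 1)
      = Lagrange.nodalWeight s v i := by
    intro i hi
    rw [← Lagrange.natDegree_basis hvs hi, coeff_natDegree, leadingCoeff_lagrange_basis]
  rw [Finset.sum_congr rfl (fun i hi => by rw [hb i hi])] at h2
  rw [show ∑ i ∈ s, Lagrange.nodalWeight s v i * v i ^ k
      = ∑ i ∈ s, v i ^ k * Lagrange.nodalWeight s v i from
    Finset.sum_congr rfl fun i _ => mul_comm _ _, ← h2]

lemma erase_eq_Iio_union_Ioi {n : ℕ} (i : Fin n) :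
    (univ : Finset (Fin n)).erase i = Iio i ∪ Ioi i := by
  ext j
  simp only [mem_erase, mem_univ, and_true, mem_union, mem_Iio, mem_Ioi]
  exact ne_iff_lt_or_gt

lemma prod_erase_eq {n : ℕ} (v : Fin n → ℝ) (i : Fin n) :
    ∏ j ∈ (univ : Finset (Fin n)).erase i, (v i - v j)
      = (-1) ^ (n - 1 - i.val) *
        ((∏ j ∈ Iio i, (v i - v j)) * ∏ j ∈ Ioi i, (v j - v i)) := by
  rw [erase_eq_Iio_union_Ioi, Finset.prod_union
    (Finset.disjoint_left.2 fun j hj1 hj2 =>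
      absurd (mem_Iio.1 hj1) (asymm (mem_Ioi.1 hj2)))]
  have : ∏ j ∈ Ioi i, (v i - v j) = (-1) ^ (n - 1 - i.val) * ∏ j ∈ Ioi i, (v j - v i) := by
    rw [show (n - 1 - i.val) = #(Ioi i) from (Fin.card_Ioi i).symm,
      ← Finset.prod_const, ← Finset.prod_mul_distrib]
    exact Finset.prod_congr rfl fun j _ => by ring
  rw [this]; ring

lemma q_pos {n : ℕ} (v : Fin n → ℝ) (hv : StrictMono v) (i : Fin n) :
    0 < (∏ j ∈ Iio i, (v i - v j)) * ∏ j ∈ Ioi i, (v j - v i) :=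
  mul_pos (Finset.prod_pos fun j hj => sub_pos.2 (hv (mem_Iio.1 hj)))
    (Finset.prod_pos fun j hj => sub_pos.2 (hv (mem_Ioi.1 hj)))

lemma nodalWeight_sign {n : ℕ} (v : Fin n → ℝ) (i : Fin n) :
    Lagrange.nodalWeight univ v i
      = (-1) ^ (n - 1 - i.val) *
        ((∏ j ∈ Iio i, (v i - v j)) * ∏ j ∈ Ioi i, (v j - v i))⁻¹ := by
  rw [Lagrange.nodalWeight, Finset.prod_inv_distrib, prod_erase_eq, mul_inv,
    ← inv_pow, inv_neg, inv_one]

lemma card_odd_filter (m : ℕ) :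
    #(univ.filter (fun i : Fin (2 * m) => i.val % 2 = 1)) = m := by
  rw [show univ.filter (fun i : Fin (2 * m) => i.val % 2 = 1)
      = Finset.image (fun k : Fin m => (⟨2 * k.val + 1, by omega⟩ : Fin (2 * m))) univ by
    ext i
    simp only [mem_filter, mem_univ, true_and, mem_image]
    constructor
    · rintro h
      exact ⟨⟨i.val / 2, by omega⟩, Fin.ext (by simp; omega)⟩
    · rintro ⟨k, rfl⟩
      show (2 * k.val + 1) % 2 = 1
      omega]
  rw [Finset.card_image_of_injective _ fun a b hab => by
    rw [Fin.mk.injEq] at hab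
    exact Fin.ext (by omega)]
  simp

lemma card_even_filter (m : ℕ) :
    #(univ.filter (fun i : Fin (2 * m) => i.val % 2 = 0)) = m := by
  have h := Finset.card_filter_add_card_filter_not
    (s := (univ : Finset (Fin (2 * m)))) (p := fun i => i.val % 2 = 1)
  rw [card_odd_filter] at h
  have : (univ.filter (fun i : Fin (2 * m) => ¬ i.val % 2 = 1))
      = univ.filter (fun i : Fin (2 * m) => i.val % 2 = 0) := by
    apply Finset.filter_congr; intro i _; omega
  rw [this] at h
  simp only [Finset.card_univ, Fintype.card_fin] at h
  omega

lemma key_vanish_prod {n : ℕ} (hn : 2 ≤ n) (v : Fin n → ℝ) (hv : Function.Injective v)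
    {κ : Type*} [DecidableEq κ] (K : Finset κ) (hK : #K ≤ n - 2) (a b : κ → ℝ) :
    ∑ i : Fin n, Lagrange.nodalWeight univ v i
      * ∏ k ∈ K, (v i * a k + (1 - v i) * b k) = 0 := by
  have h1 : ∀ i : Fin n, ∏ k ∈ K, (v i * a k + (1 - v i) * b k)
      = ∑ U ∈ K.powerset, v i ^ #U * ((∏ k ∈ U, (a k - b k)) * ∏ k ∈ K \ U, b k) := by
    intro i
    calc ∏ k ∈ K, (v i * a k + (1 - v i) * b k)
        = ∏ k ∈ K, (v i * (a k - b k) + b k) :=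
          Finset.prod_congr rfl fun k _ => by ring
      _ = ∑ U ∈ K.powerset, (∏ k ∈ U, v i * (a k - b k)) * ∏ k ∈ K \ U, b k :=
          Finset.prod_add _ _ _
      _ = _ := Finset.sum_congr rfl fun U _ => by
          rw [Finset.prod_mul_distrib, Finset.prod_const]; ring
  simp_rw [h1, Finset.mul_sum]
  rw [Finset.sum_comm]
  refine Finset.sum_eq_zero fun U hU => ?_
  have hcard : #U + 1 < #(univ : Finset (Fin n)) := by
    have := Finset.card_le_card (Finset.mem_powerset.1 hU)
    simp only [Finset.card_univ, Fintype.card_fin]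
    omega
  have hz := key_vanish univ v hv.injOn #U hcard
  calc ∑ i : Fin n, Lagrange.nodalWeight univ v i
        * (v i ^ #U * ((∏ k ∈ U, (a k - b k)) * ∏ k ∈ K \ U, b k))
      = (∑ i : Fin n, Lagrange.nodalWeight univ v i * v i ^ #U)
        * ((∏ k ∈ U, (a k - b k)) * ∏ k ∈ K \ U, b k) := by
        rw [Finset.sum_mul]; exact Finset.sum_congr rfl fun i _ => by ring
    _ = 0 := by rw [hz, zero_mul]

theorem exists_distinct_mixtures_eq_prod_law
    {Ω : Type*} [MeasurableSpace Ω] (ρ ρ' : Measure Ω)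
    [IsProbabilityMeasure ρ] [IsProbabilityMeasure ρ'] (hρ : ρ ≠ ρ')
    (m : ℕ) (hm : 1 ≤ m) :
    ∃ (ε : Fin (2 * m) → ℝ) (S T : Finset (Fin (2 * m))) (β : Fin (2 * m) → ℝ),
      (∀ i, ε i ∈ Set.Icc (0 : ℝ) 1) ∧ Function.Injective ε ∧
      Function.Injective
        (fun i => ENNReal.ofReal (ε i) • ρ + ENNReal.ofReal (1 - ε i) • ρ') ∧
      Disjoint S T ∧ S ∪ T = Finset.univ ∧ S.card = m ∧ T.card = m ∧
      (∀ i, 0 < β i) ∧ (∑ i ∈ S, β i = 1) ∧ (∑ j ∈ T, β j = 1) ∧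
      ∑ i ∈ S, ENNReal.ofReal (β i) • Measure.pi (fun _ : Fin (2 * m - 2) =>
          ENNReal.ofReal (ε i) • ρ + ENNReal.ofReal (1 - ε i) • ρ')
        = ∑ j ∈ T, ENNReal.ofReal (β j) • Measure.pi (fun _ : Fin (2 * m - 2) =>
          ENNReal.ofReal (ε j) • ρ + ENNReal.ofReal (1 - ε j) • ρ') := by
  classical
  have hn2 : 2 ≤ 2 * m := by omega
  have hdpos : (0:ℝ) < ((2 * m - 1 : ℕ) : ℝ) := by
    exact_mod_cast Nat.pos_of_ne_zero (by omega)
  set d : ℝ := ((2 * m - 1 : ℕ) : ℝ) with hd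
  set ε : Fin (2 * m) → ℝ := fun i => (i : ℝ) / d with hε
  have hεmono : StrictMono ε := by
    intro i j hij
    have hij' : (i : ℝ) < (j : ℝ) := by exact_mod_cast hij
    show (i : ℝ) / d < (j : ℝ) / d
    gcongr
  have hεinj : Function.Injective ε := hεmono.injective
  have hεmem : ∀ i : Fin (2 * m), ε i ∈ Set.Icc (0:ℝ) 1 := by
    intro i
    constructor
    · exact div_nonneg (Nat.cast_nonneg _) hdpos.le
    · rw [div_le_one hdpos]
      have h : i.val ≤ 2 * m - 1 := by omega
      rw [hd]
      exact_mod_cast h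
  have hε1 : ∀ i : Fin (2 * m), 0 ≤ 1 - ε i := fun i => by linarith [(hεmem i).2]
  set c : Fin (2 * m) → ℝ := fun i => Lagrange.nodalWeight univ ε i with hc
  set q : Fin (2 * m) → ℝ :=
    fun i => (∏ j ∈ Iio i, (ε i - ε j)) * ∏ j ∈ Ioi i, (ε j - ε i) with hq
  have hqpos : ∀ i, 0 < q i := q_pos ε hεmono
  have hcS : ∀ i : Fin (2 * m), i.val % 2 = 1 → c i = (q i)⁻¹ := by
    intro i hi
    have hlt := i.isLt
    have heven : Even (2 * m - 1 - i.val) := by rw [Nat.even_iff]; omega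
    show Lagrange.nodalWeight univ ε i = (q i)⁻¹
    rw [nodalWeight_sign, heven.neg_one_pow, one_mul]
  have hcT : ∀ i : Fin (2 * m), i.val % 2 = 0 → c i = -(q i)⁻¹ := by
    intro i hi
    have hlt := i.isLt
    have hodd : Odd (2 * m - 1 - i.val) := by rw [Nat.odd_iff]; omega
    show Lagrange.nodalWeight univ ε i = -(q i)⁻¹
    rw [nodalWeight_sign, hodd.neg_one_pow, neg_one_mul]
  set S : Finset (Fin (2 * m)) := univ.filter (fun i => i.val % 2 = 1) with hS
  set T : Finset (Fin (2 * m)) := univ.filter (fun i => i.val % 2 = 0) with hT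
  have hmemS : ∀ i ∈ S, i.val % 2 = 1 := fun i hi => (Finset.mem_filter.1 hi).2
  have hmemT : ∀ i ∈ T, i.val % 2 = 0 := fun i hi => (Finset.mem_filter.1 hi).2
  have hTS : univ.filter (fun i : Fin (2 * m) => ¬ i.val % 2 = 1) = T := by
    apply Finset.filter_congr; intro i _; omega
  have hSm : #S = m := card_odd_filter m
  have hTm : #T = m := card_even_filter m
  have hdisj : Disjoint S T := by
    rw [Finset.disjoint_left]
    intro i hiS hiT
    have h1 := hmemS i hiS; have h2 := hmemT i hiT; omega
  have hunion : S ∪ T = univ := by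
    rw [hS, ← hTS]
    exact Finset.filter_union_filter_not_eq _ univ
  have hsplit : ∀ f : Fin (2 * m) → ℝ, ∑ i ∈ S, f i + ∑ i ∈ T, f i = ∑ i, f i := by
    intro f
    rw [← hTS]
    exact Finset.sum_filter_add_sum_filter_not univ _ f
  have hvanish : ∀ {κ : Type} [DecidableEq κ] (K : Finset κ), #K ≤ 2 * m - 2 →
      ∀ a b : κ → ℝ, ∑ i, c i * ∏ k ∈ K, (ε i * a k + (1 - ε i) * b k) = 0 := by
    intro κ _ K hK a b
    exact key_vanish_prod hn2 ε hεinj K hK a b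
  have hsum0 : ∑ i, c i = 0 := by
    have h := hvanish (∅ : Finset ℕ) (by simp) (fun _ => 0) (fun _ => 0)
    simpa using h
  set B : ℝ := ∑ i ∈ S, c i with hB
  have hSne : S.Nonempty := Finset.card_pos.1 (by omega)
  have hBpos : 0 < B := by
    refine Finset.sum_pos (fun i hi => ?_) hSne
    rw [hcS i (hmemS i hi)]
    exact inv_pos.2 (hqpos i)
  have hTsum : ∑ i ∈ T, c i = -B := by
    have := hsplit c
    rw [hsum0] at this
    linarith
  set β : Fin (2 * m) → ℝ := fun i => (q i)⁻¹ / B with hβ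
  have hβpos : ∀ i, 0 < β i := fun i => div_pos (inv_pos.2 (hqpos i)) hBpos
  have hβS : ∀ i ∈ S, β i = c i / B := by
    intro i hi
    show (q i)⁻¹ / B = c i / B
    rw [hcS i (hmemS i hi)]
  have hβT : ∀ i ∈ T, β i = -c i / B := by
    intro i hi
    show (q i)⁻¹ / B = -c i / B
    rw [hcT i (hmemT i hi), neg_neg]
  have hβSsum : ∑ i ∈ S, β i = 1 := by
    rw [Finset.sum_congr rfl hβS, ← Finset.sum_div, ← hB, div_self hBpos.ne']
  have hβTsum : ∑ i ∈ T, β i = 1 := by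
    rw [Finset.sum_congr rfl hβT, ← Finset.sum_div, Finset.sum_neg_distrib, hTsum,
      neg_neg, div_self hBpos.ne']
  -- injectivity of the mixture map
  have hμinj : Function.Injective
      (fun i : Fin (2 * m) => ENNReal.ofReal (ε i) • ρ + ENNReal.ofReal (1 - ε i) • ρ') := by
    obtain ⟨A, hAmeas, hAne⟩ : ∃ A, MeasurableSet A ∧ ρ A ≠ ρ' A := by
      by_contra h
      push_neg at h
      exact hρ (Measure.ext h)
    intro i j hij
    apply hεinj
    have h2 := congrArg (fun μ : Measure Ω => μ A) hij
    simp only [Measure.add_apply, Measure.smul_apply, smul_eq_mul] at h2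
    have hru : ρ A = ENNReal.ofReal ((ρ A).toReal) := (ENNReal.ofReal_toReal (measure_ne_top ρ A)).symm
    have hrw : ρ' A = ENNReal.ofReal ((ρ' A).toReal) := (ENNReal.ofReal_toReal (measure_ne_top ρ' A)).symm
    set u : ℝ := (ρ A).toReal
    set w : ℝ := (ρ' A).toReal
    have huw : u ≠ w := fun h => hAne (by rw [hru, hrw, h])
    rw [hru, hrw, ← ENNReal.ofReal_mul (hεmem i).1, ← ENNReal.ofReal_mul (hε1 i),
      ← ENNReal.ofReal_mul (hεmem j).1, ← ENNReal.ofReal_mul (hε1 j),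
      ← ENNReal.ofReal_add (mul_nonneg (hεmem i).1 ENNReal.toReal_nonneg)
        (mul_nonneg (hε1 i) ENNReal.toReal_nonneg),
      ← ENNReal.ofReal_add (mul_nonneg (hεmem j).1 ENNReal.toReal_nonneg)
        (mul_nonneg (hε1 j) ENNReal.toReal_nonneg)] at h2
    rw [ENNReal.ofReal_eq_ofReal_iff
      (add_nonneg (mul_nonneg (hεmem i).1 ENNReal.toReal_nonneg)
        (mul_nonneg (hε1 i) ENNReal.toReal_nonneg))
      (add_nonneg (mul_nonneg (hεmem j).1 ENNReal.toReal_nonneg)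
        (mul_nonneg (hε1 j) ENNReal.toReal_nonneg))] at h2
    have hfac : (ε i - ε j) * (u - w) = 0 := by linear_combination h2
    rcases mul_eq_zero.1 hfac with h | h
    · exact sub_eq_zero.1 h
    · exact absurd (sub_eq_zero.1 h) huw
  -- probability measures
  have hprob : ∀ i : Fin (2 * m),
      IsProbabilityMeasure (ENNReal.ofReal (ε i) • ρ + ENNReal.ofReal (1 - ε i) • ρ') := by
    intro i
    constructor
    simp only [Measure.add_apply, Measure.smul_apply, smul_eq_mul, measure_univ, mul_one]
    rw [← ENNReal.ofReal_add (hεmem i).1 (hε1 i)]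
    norm_num
  -- value of the mixture on a set
  have hμval : ∀ (i : Fin (2 * m)) (A : Set Ω),
      (ENNReal.ofReal (ε i) • ρ + ENNReal.ofReal (1 - ε i) • ρ') A
        = ENNReal.ofReal (ε i * (ρ A).toReal + (1 - ε i) * (ρ' A).toReal) := by
    intro i A
    rw [Measure.add_apply, Measure.smul_apply, Measure.smul_apply, smul_eq_mul, smul_eq_mul,
      ← ENNReal.ofReal_toReal (measure_ne_top ρ A), ← ENNReal.ofReal_toReal (measure_ne_top ρ' A),
      ← ENNReal.ofReal_mul (hεmem i).1, ← ENNReal.ofReal_mul (hε1 i),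
      ← ENNReal.ofReal_add (mul_nonneg (hεmem i).1 ENNReal.toReal_nonneg)
        (mul_nonneg (hε1 i) ENNReal.toReal_nonneg)]
    simp [ENNReal.ofReal_toReal (measure_ne_top ρ A), ENNReal.ofReal_toReal (measure_ne_top ρ' A)]
  -- evaluation of the mixture of product measures on boxes
  have hPnonneg : ∀ (i : Fin (2 * m)) (s' : Fin (2 * m - 2) → Set Ω),
      (0:ℝ) ≤ ∏ k, (ε i * (ρ (s' k)).toReal + (1 - ε i) * (ρ' (s' k)).toReal) :=
    fun i s' => Finset.prod_nonneg fun k _ =>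
      add_nonneg (mul_nonneg (hεmem i).1 ENNReal.toReal_nonneg)
        (mul_nonneg (hε1 i) ENNReal.toReal_nonneg)
  have heval : ∀ (W : Finset (Fin (2 * m))) (s' : Fin (2 * m - 2) → Set Ω),
      (∑ i ∈ W, ENNReal.ofReal (β i) • Measure.pi (fun _ : Fin (2 * m - 2) =>
          ENNReal.ofReal (ε i) • ρ + ENNReal.ofReal (1 - ε i) • ρ')) (Set.pi Set.univ s')
      = ENNReal.ofReal (∑ i ∈ W,
          β i * ∏ k, (ε i * (ρ (s' k)).toReal + (1 - ε i) * (ρ' (s' k)).toReal)) := by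
    intro W s'
    rw [Measure.finset_sum_apply,
      ENNReal.ofReal_sum_of_nonneg (fun i _ => mul_nonneg (hβpos i).le (hPnonneg i s'))]
    refine Finset.sum_congr rfl fun i _ => ?_
    haveI := hprob i
    rw [Measure.smul_apply, smul_eq_mul, Measure.pi_pi,
      ENNReal.ofReal_mul (hβpos i).le]
    congr 1
    rw [ENNReal.ofReal_prod_of_nonneg (fun k _ =>
      add_nonneg (mul_nonneg (hεmem i).1 ENNReal.toReal_nonneg)
        (mul_nonneg (hε1 i) ENNReal.toReal_nonneg))]
    exact Finset.prod_congr rfl fun k _ => hμval i (s' k)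
  -- the real identity on boxes
  have hreal : ∀ s' : Fin (2 * m - 2) → Set Ω,
      ∑ i ∈ S, β i * ∏ k, (ε i * (ρ (s' k)).toReal + (1 - ε i) * (ρ' (s' k)).toReal)
      = ∑ i ∈ T, β i * ∏ k, (ε i * (ρ (s' k)).toReal + (1 - ε i) * (ρ' (s' k)).toReal) := by
    intro s'
    set P : Fin (2 * m) → ℝ :=
      fun i => ∏ k, (ε i * (ρ (s' k)).toReal + (1 - ε i) * (ρ' (s' k)).toReal) with hP
    have h0 : ∑ i, c i * P i = 0 := by
      apply hvanish (univ : Finset (Fin (2 * m - 2)))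
      simp only [Finset.card_univ, Fintype.card_fin]
      exact le_rfl
    have hST : ∑ i ∈ S, c i * P i + ∑ i ∈ T, c i * P i = 0 := by
      rw [hsplit (fun i => c i * P i)]; exact h0
    have hSide : ∑ i ∈ S, β i * P i = (∑ i ∈ S, c i * P i) / B := by
      rw [Finset.sum_div]
      exact Finset.sum_congr rfl fun i hi => by rw [hβS i hi]; ring
    have hTide : ∑ i ∈ T, β i * P i = (-∑ i ∈ T, c i * P i) / B := by
      rw [← Finset.sum_neg_distrib, Finset.sum_div]
      exact Finset.sum_congr rfl fun i hi => by rw [hβT i hi]; ring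
    rw [hSide, hTide]
    congr 1
    linarith
  refine ⟨ε, S, T, β, hεmem, hεinj, hμinj, hdisj, hunion, hSm, hTm, hβpos, hβSsum, hβTsum, ?_⟩
  have huniv : (Set.univ : Set (Fin (2 * m - 2) → Ω))
      = Set.pi Set.univ (fun _ => Set.univ) := (Set.pi_univ _).symm
  haveI : IsFiniteMeasure (∑ i ∈ S, ENNReal.ofReal (β i) • Measure.pi
      (fun _ : Fin (2 * m - 2) => ENNReal.ofReal (ε i) • ρ + ENNReal.ofReal (1 - ε i) • ρ')) := by
    constructor
    rw [huniv, heval]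
    exact ENNReal.ofReal_lt_top
  refine MeasureTheory.ext_of_generate_finite _ generateFrom_pi.symm isPiSystem_pi ?_ ?_
  · rintro _ ⟨s', hs', rfl⟩
    rw [heval S s', heval T s', hreal s']
  · rw [huniv, heval S _, heval T _, hreal]
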